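/- Over the polynomial ring R = 𝔽_q[x] with q odd, let F = diag((1-x²)², 1) and G = diag((1-x)², (1+x)²) as symmetric 2×2 matrices. Then there exists Q ∈ GL₂(𝔽_q(x)) with QᵀFQ = G, but there is no Q ∈ GL₂(R) with QᵀFQ = G. -/

import Mathlib

open Polynomial Matrix

/-- In a finite field of odd cardinality, `2 ≠ 0`. -/
lemma stmt5_two_ne_zero (Fq : Type*) [Field Fq] [Fintype Fq] (hq : Odd (Fintype.card Fq)) :
    (2 : Fq) ≠ 0 := by
  intro h2
  have hi : CharP Fq (ringChar Fq) := ringChar.charP Fq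
  have hchar : ringChar Fq ∣ 2 :=
    (CharP.cast_eq_zero_iff Fq (ringChar Fq) 2).mp (by exact_mod_cast h2)
  have hp : (ringChar Fq).Prime := CharP.char_is_prime Fq (ringChar Fq)
  have h2' : ringChar Fq = 2 := (Nat.prime_dvd_prime_iff_eq hp Nat.prime_two).mp hchar
  obtain ⟨n, -, hcard⟩ := FiniteField.card Fq (ringChar Fq)
  rw [hcard, h2'] at hq
  exact (Nat.not_odd_iff_even.mpr (Nat.even_pow.mpr ⟨even_two, n.ne_zero⟩)) hq

/-- If `u² + w² = 1` in `𝔽_q[x]` with `q` odd, then `u` is constant. -/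
lemma stmt5_key (Fq : Type*) [Field Fq] [Fintype Fq] (hq : Odd (Fintype.card Fq))
    (u w : Polynomial Fq) (h : u ^ 2 + w ^ 2 = 1) : u.natDegree = 0 := by
  classical
  set L := AlgebraicClosure Fq
  obtain ⟨i, hi⟩ := IsAlgClosed.exists_pow_nat_eq (-1 : L) (n := 2) (by norm_num)
  set f := algebraMap Fq L with hf_def
  have hfinj : Function.Injective f := f.injective
  have h2L : (2 : L) ≠ 0 := by
    have : f 2 = 2 := map_ofNat f 2
    intro h0
    exact stmt5_two_ne_zero Fq hq (hfinj (by rw [this, h0, map_zero]))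
  set um := u.map f with hum_def
  set wm := w.map f with hwm_def
  have hmapped : um ^ 2 + wm ^ 2 = 1 := by
    have := congrArg (Polynomial.map f) h
    simpa [Polynomial.map_add, Polynomial.map_pow] using this
  have hC : (C i : L[X]) ^ 2 = -1 := by rw [← C_pow, hi, map_neg, Polynomial.C_1]
  have hmul : (um + C i * wm) * (um - C i * wm) = 1 := by
    linear_combination hmapped - wm ^ 2 * hC
  have hu1 : IsUnit (um + C i * wm) := IsUnit.of_mul_eq_one _ hmul
  have hu2 : IsUnit (um - C i * wm) :=
    IsUnit.of_mul_eq_one _ (by rw [mul_comm] at hmul; exact hmul)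
  have hC2 : (C (2:L) : L[X]) = 2 := map_ofNat _ 2
  have hCinv : (C ((2:L)⁻¹) : L[X]) * 2 = 1 := by
    rw [← hC2, ← Polynomial.C_mul, inv_mul_cancel₀ h2L, Polynomial.C_1]
  have hum : um = C ((2:L)⁻¹) * ((um + C i * wm) + (um - C i * wm)) := by
    linear_combination (-um) * hCinv
  have hdeg : um.natDegree = 0 := by
    have h1 := natDegree_eq_zero_of_isUnit hu1
    have h2 := natDegree_eq_zero_of_isUnit hu2
    have : um.natDegree ≤ 0 := by
      rw [hum]
      refine (natDegree_C_mul_le _ _).trans ?_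
      refine (natDegree_add_le _ _).trans ?_
      simp [h1, h2]
    omega
  rw [← natDegree_map_eq_of_injective hfinj u]
  exact hdeg

/-- If `(pr)²a² + c² = p²` with `p` prime and `deg r = 1`, then `a = 0`. -/
lemma stmt5_helper (Fq : Type*) [Field Fq] [Fintype Fq] (hq : Odd (Fintype.card Fq))
    (p r a c : Polynomial Fq) (hp : Prime p) (hr : r.natDegree = 1)
    (h : (p * r) ^ 2 * a ^ 2 + c ^ 2 = p ^ 2) : a = 0 := by
  have hp0 : p ≠ 0 := hp.ne_zero
  have hr0 : r ≠ 0 := by intro h0; rw [h0] at hr; simp at hr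
  have hdvd : p ∣ c := by
    refine hp.dvd_of_dvd_pow (n := 2) ?_
    exact ⟨p * (1 - r ^ 2 * a ^ 2), by linear_combination h⟩
  obtain ⟨c₁, rfl⟩ := hdvd
  have hcanc : (r * a) ^ 2 + c₁ ^ 2 = 1 := by
    have hp2 : p ^ 2 ≠ 0 := pow_ne_zero _ hp0
    apply mul_left_cancel₀ hp2
    linear_combination h
  have hdeg := stmt5_key Fq hq (r * a) c₁ hcanc
  by_contra ha
  rw [natDegree_mul hr0 ha, hr] at hdeg
  omega

/-- Over `R = 𝔽_q[x]` (`q` odd), the symmetric matrices `F = diag((1-x²)², 1)` and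
`G = diag((1-x)², (1+x)²)` are congruent over the fraction field `𝔽_q(x)`, but they
are not congruent over `R` itself. -/
theorem stmt5 (Fq : Type*) [Field Fq] [Fintype Fq] (hq : Odd (Fintype.card Fq)) :
    (∃ Q : Matrix (Fin 2) (Fin 2) (RatFunc Fq), IsUnit Q.det ∧
      Qᵀ * Matrix.diagonal ![((1 - RatFunc.X ^ 2) ^ 2 : RatFunc Fq), 1] * Q =
        Matrix.diagonal ![((1 - RatFunc.X) ^ 2 : RatFunc Fq), (1 + RatFunc.X) ^ 2]) ∧
    ¬ (∃ Q : Matrix (Fin 2) (Fin 2) (Polynomial Fq), IsUnit Q.det ∧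
      Qᵀ * Matrix.diagonal ![((1 - X ^ 2) ^ 2 : Polynomial Fq), 1] * Q =
        Matrix.diagonal ![((1 - X) ^ 2 : Polynomial Fq), (1 + X) ^ 2]) := by
  constructor
  · -- congruence over the fraction field via Q = diag((1+x)⁻¹, 1+x)
    have hu0 : (1 + RatFunc.X : RatFunc Fq) ≠ 0 := by
      have : (1 + RatFunc.X : RatFunc Fq) = algebraMap (Polynomial Fq) (RatFunc Fq) (1 + X) := by
        rw [map_add, _root_.map_one, RatFunc.algebraMap_X]
      rw [this]
      refine RatFunc.algebraMap_ne_zero ?_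
      intro h0
      have := congrArg (Polynomial.eval (0 : Fq)) h0
      simp at this
    refine ⟨Matrix.diagonal ![(1 + RatFunc.X)⁻¹, 1 + RatFunc.X], ?_, ?_⟩
    · rw [Matrix.det_diagonal, Fin.prod_univ_two]
      simp only [Matrix.cons_val_zero, Matrix.cons_val_one, Matrix.head_cons]
      rw [inv_mul_cancel₀ hu0]
      exact isUnit_one
    · rw [Matrix.diagonal_transpose, Matrix.diagonal_mul_diagonal, Matrix.diagonal_mul_diagonal,
        Matrix.diagonal_eq_diagonal_iff]
      intro j
      fin_cases j <;>
        simp only [Pi.mul_apply, Fin.mk_zero, Fin.mk_one, Fin.isValue, Matrix.cons_val_zero,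
          Matrix.cons_val_one, Matrix.head_cons]
      · have h1 : (1 - RatFunc.X ^ 2 : RatFunc Fq) = (1 - RatFunc.X) * (1 + RatFunc.X) := by ring
        rw [h1]
        field_simp
      · ring
  · -- no congruence over the polynomial ring
    rintro ⟨Q, hdet, hQ⟩
    have h00 : ((1 - X) * (1 + X)) ^ 2 * (Q 0 0) ^ 2 + (Q 1 0) ^ 2 = ((1 - X : Polynomial Fq)) ^ 2 := by
      have h := congrArg (fun M => M 0 0) hQ
      simp [Matrix.mul_apply, Fin.sum_univ_two] at h
      linear_combination h
    have h11 : ((1 + X) * (1 - X)) ^ 2 * (Q 0 1) ^ 2 + (Q 1 1) ^ 2 = ((1 + X : Polynomial Fq)) ^ 2 := by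
      have h := congrArg (fun M => M 1 1) hQ
      simp [Matrix.mul_apply, Fin.sum_univ_two] at h
      linear_combination h
    have hprime1 : Prime ((1 : Polynomial Fq) - X) := by
      have h2 : ((1 : Polynomial Fq) - X) = -(X - C 1) := by rw [Polynomial.C_1]; ring
      rw [h2]
      exact (Polynomial.prime_X_sub_C (1 : Fq)).neg
    have hprime2 : Prime ((1 : Polynomial Fq) + X) := by
      have h2 : ((1 : Polynomial Fq) + X) = X - C (-1) := by rw [map_neg, Polynomial.C_1]; ring
      rw [h2]
      exact Polynomial.prime_X_sub_C (-1 : Fq)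
    have hdeg1 : ((1 : Polynomial Fq) - X).natDegree = 1 := by
      have h2 : ((1 : Polynomial Fq) - X) = -(X - C 1) := by rw [Polynomial.C_1]; ring
      rw [h2, natDegree_neg, natDegree_X_sub_C]
    have hdeg2 : ((1 : Polynomial Fq) + X).natDegree = 1 := by
      have h2 : ((1 : Polynomial Fq) + X) = X + C 1 := by rw [Polynomial.C_1]; ring
      rw [h2, natDegree_X_add_C]
    have ha : Q 0 0 = 0 := stmt5_helper Fq hq _ _ _ _ hprime1 hdeg2 h00
    have hb : Q 0 1 = 0 := stmt5_helper Fq hq _ _ _ _ hprime2 hdeg1 h11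
    rw [Matrix.det_fin_two, ha, hb] at hdet
    simp at hdet
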